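/- Let Δ(λ,q) = φ_{N+2}(λ,q) + θ_{N+1}(λ,q) be the discrete Lyapunov (discriminant) function for an (N+1)-periodic potential q. Then: if N is odd, Δ(λ,q) = Σ_{j=0}^{(N+1)/2} (-1)^{j+(N+1)/2} G_{2j}^{N+1}(λ,q); if N is even, Δ(λ,q) = Σ_{j=0}^{N/2} (-1)^{j+N/2} G_{2j+1}^{N+1}(λ,q). -/

import Mathlib

/-- The predicate describing membership in `D_j^n`: `α` is strictly increasing,
`1 ≤ α s ≤ n`, and the consecutive differences `α (s+1) - α s` are odd for
`s = 1, ..., j-1`. -/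
def isD (j n : ℕ) (α : Fin j → ℕ) : Prop :=
  StrictMono α ∧ (∀ s, 1 ≤ α s ∧ α s ≤ n) ∧
    ∀ (s : Fin j) (h : (s : ℕ) + 1 < j), Odd ((α ⟨(s : ℕ) + 1, h⟩ : ℤ) - (α s : ℤ))

open Classical in
/-- `Gpoly j n lam q = G_j^n(λ,q) = Σ_{α ∈ D_j^n} Π_{s=1}^j (λ - q (α s))`,
with `G_0^n = 2`. -/
noncomputable def Gpoly (j n : ℕ) (lam : ℂ) (q : ℕ → ℂ) : ℂ :=
  if j = 0 then 2
  else ∑ β : Fin j → Fin (n + 2),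
    if isD j n (fun s => (β s : ℕ)) then ∏ s, (lam - q (β s)) else 0

/-- Fundamental solution `φ` with `φ_0 = 0`, `φ_1 = 1`,
`φ_{n+1} = (λ - q_n) φ_n - φ_{n-1}`. -/
noncomputable def phi (lam : ℂ) (q : ℕ → ℂ) : ℕ → ℂ
  | 0 => 0
  | 1 => 1
  | n + 2 => (lam - q (n + 1)) * phi lam q (n + 1) - phi lam q n

/-- Fundamental solution `θ` with `θ_0 = 1`, `θ_1 = 0`,
`θ_{n+1} = (λ - q_n) θ_n - θ_{n-1}`. -/
noncomputable def theta (lam : ℂ) (q : ℕ → ℂ) : ℕ → ℂ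
  | 0 => 1
  | 1 => 0
  | n + 2 => (lam - q (n + 1)) * theta lam q (n + 1) - theta lam q n

/-- The Lyapunov (discriminant) function `Δ(λ,q) = φ_{N+2}(λ,q) + θ_{N+1}(λ,q)`
for an `(N+1)`-periodic potential. -/
noncomputable def Delta (N : ℕ) (lam : ℂ) (q : ℕ → ℂ) : ℂ :=
  phi lam q (N + 2) + theta lam q (N + 1)


namespace DAux
open Finset
def rk (A : Finset ℕ) (x : ℕ) : ℕ := (A.filter (· < x)).card
def Prk (ε : ℕ) (A : Finset ℕ) : Prop := ∀ x ∈ A, (x + rk A x) % 2 = ε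

lemma rk_insert_mem {A : Finset ℕ} {a x : ℕ} (hx : x < a) :
    rk (insert a A) x = rk A x := by
  classical
  unfold rk
  rw [Finset.filter_insert, if_neg (by omega)]

lemma rk_insert_self {A : Finset ℕ} {a : ℕ} (ha : a ∉ A) (hlt : ∀ x ∈ A, x < a) :
    rk (insert a A) a = A.card := by
  classical
  unfold rk
  rw [Finset.filter_insert, if_neg (by omega), Finset.filter_true_of_mem hlt]

lemma Prk_insert_iff {A : Finset ℕ} {a ε : ℕ} (ha : a ∉ A) (hlt : ∀ x ∈ A, x < a)
    (hpar : (a + A.card) % 2 = ε) : (Prk ε (insert a A) ↔ Prk ε A) := by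
  constructor
  · intro h x hx
    have := h x (Finset.mem_insert_of_mem hx)
    rwa [rk_insert_mem (hlt x hx)] at this
  · intro h x hx
    rcases Finset.mem_insert.mp hx with rfl | hx
    · rwa [rk_insert_self ha hlt]
    · rw [rk_insert_mem (hlt x hx)]; exact h x hx


open Classical in
noncomputable def PW (ε j n : ℕ) (lam : ℂ) (q : ℕ → ℂ) : ℂ :=
  ∑ A ∈ (Finset.Icc 1 n).powerset,
    if A.card = j ∧ j % 2 = n % 2 ∧ Prk ε A then ∏ x ∈ A, (lam - q x) else 0

lemma PW_succ (i m : ℕ) (lam : ℂ) (q : ℕ → ℂ) :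
    PW 1 (i+1) (m+2) lam q
      = (lam - q (m+2)) * PW 1 i (m+1) lam q + PW 1 (i+1) m lam q := by
  classical
  have hIcc : Finset.Icc 1 (m+2) = insert (m+2) (Finset.Icc 1 (m+1)) := by
    ext x; simp [Finset.mem_Icc]; omega
  have hdisj : Disjoint ((Finset.Icc 1 (m+1)).powerset)
      (Finset.image (insert (m+2)) (Finset.Icc 1 (m+1)).powerset) := by
    rw [Finset.disjoint_right]
    intro A hA hA'
    rw [Finset.mem_image] at hA
    obtain ⟨B, hB, rfl⟩ := hA
    rw [Finset.mem_powerset] at hA'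
    have := hA' (Finset.mem_insert_self _ _)
    simp [Finset.mem_Icc] at this
  rw [PW, hIcc, Finset.powerset_insert, Finset.sum_union hdisj, add_comm]
  congr 1
  -- image part
  · have hinj : ∀ A ∈ (Finset.Icc 1 (m+1)).powerset, ∀ B ∈ (Finset.Icc 1 (m+1)).powerset,
        insert (m+2) A = insert (m+2) B → A = B := by
      intro A hA B hB hAB
      rw [Finset.mem_powerset] at hA hB
      have hA2 : (m+2) ∉ A := fun h => by have := hA h; simp [Finset.mem_Icc] at this
      have hB2 : (m+2) ∉ B := fun h => by have := hB h; simp [Finset.mem_Icc] at this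
      have h2 := congrArg (fun s => Finset.erase s (m+2)) hAB
      rwa [Finset.erase_insert hA2, Finset.erase_insert hB2] at h2
    rw [Finset.sum_image hinj, PW, Finset.mul_sum]
    refine Finset.sum_congr rfl fun A hA => ?_
    rw [Finset.mem_powerset] at hA
    have hm2 : (m+2) ∉ A := fun h => by have := hA h; simp [Finset.mem_Icc] at this
    have hlt : ∀ x ∈ A, x < m + 2 := fun x hx => by
      have := hA hx; simp [Finset.mem_Icc] at this; omega
    rw [mul_ite, mul_zero]
    by_cases hc : A.card = i ∧ i % 2 = (m+1) % 2 ∧ Prk 1 A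
    · obtain ⟨h1, h2, h3⟩ := hc
      rw [if_pos, if_pos ⟨h1, h2, h3⟩, Finset.prod_insert hm2]
      refine ⟨by rw [Finset.card_insert_of_notMem hm2, h1], by omega, ?_⟩
      rw [Prk_insert_iff hm2 hlt (by omega)]
      exact h3
    · rw [if_neg, if_neg hc]
      rintro ⟨h1, h2, h3⟩
      rw [Finset.card_insert_of_notMem hm2] at h1
      have h1' : A.card = i := by omega
      refine hc ⟨h1', by omega, ?_⟩
      rw [Prk_insert_iff hm2 hlt (by rw [h1']; omega)] at h3
      exact h3
  -- non-image part
  · have hsum : ∀ A : Finset ℕ,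
        (if A.card = i+1 ∧ (i+1) % 2 = (m+2) % 2 ∧ Prk 1 A then ∏ x ∈ A, (lam - q x) else 0)
        = (if A.card = i+1 ∧ (i+1) % 2 = m % 2 ∧ Prk 1 A then ∏ x ∈ A, (lam - q x) else 0) := by
      intro A
      by_cases h : A.card = i+1 ∧ (i+1) % 2 = m % 2 ∧ Prk 1 A
      · rw [if_pos h, if_pos ⟨h.1, by omega, h.2.2⟩]
      · rw [if_neg h, if_neg (by rintro ⟨h1,h2,h3⟩; exact h ⟨h1, by omega, h3⟩)]
    calc (∑ A ∈ (Finset.Icc 1 (m+1)).powerset,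
          if A.card = i+1 ∧ (i+1) % 2 = (m+2) % 2 ∧ Prk 1 A then ∏ x ∈ A, (lam - q x) else 0)
        = ∑ A ∈ (Finset.Icc 1 (m+1)).powerset,
          (if A.card = i+1 ∧ (i+1) % 2 = m % 2 ∧ Prk 1 A then ∏ x ∈ A, (lam - q x) else 0) :=
          Finset.sum_congr rfl fun A _ => hsum A
      _ = ∑ A ∈ (Finset.Icc 1 m).powerset,
          (if A.card = i+1 ∧ (i+1) % 2 = m % 2 ∧ Prk 1 A then ∏ x ∈ A, (lam - q x) else 0) := by
          symm
          apply Finset.sum_subset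
          · exact Finset.powerset_mono.mpr (Finset.Icc_subset_Icc_right (by omega))
          · intro A hA hA'
            rw [Finset.mem_powerset] at hA
            have hm1 : m + 1 ∈ A := by
              by_contra h
              refine hA' (Finset.mem_powerset.mpr fun x hx => ?_)
              have hxne : x ≠ m + 1 := fun e => h (e ▸ hx)
              have := hA hx
              simp only [Finset.mem_Icc] at this ⊢
              omega
            rw [if_neg]
            rintro ⟨h1, h2, h3⟩
            have hrk : rk A (m+1) = A.card - 1 := by
              unfold rk
              have heq : A.filter (· < m + 1) = A.erase (m+1) := by
                ext x
                simp only [Finset.mem_filter, Finset.mem_erase]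
                constructor
                · rintro ⟨hx, hlt⟩; exact ⟨by omega, hx⟩
                · rintro ⟨hne, hx⟩
                  have := hA hx; simp only [Finset.mem_Icc] at this
                  exact ⟨hx, by omega⟩
              rw [heq, Finset.card_erase_of_mem hm1]
            have := h3 (m+1) hm1
            rw [hrk, h1] at this
            omega
      _ = PW 1 (i+1) m lam q := rfl

lemma PW_zero_parity {ε j n : ℕ} (h : j % 2 ≠ n % 2) (lam : ℂ) (q : ℕ → ℂ) :
    PW ε j n lam q = 0 := by
  classical
  refine Finset.sum_eq_zero fun A _ => ?_
  rw [if_neg]; tauto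

lemma PW_zero_card {ε j n : ℕ} (h : n < j) (lam : ℂ) (q : ℕ → ℂ) :
    PW ε j n lam q = 0 := by
  classical
  refine Finset.sum_eq_zero fun A hA => ?_
  rw [Finset.mem_powerset] at hA
  have hc : A.card ≤ n := by
    calc A.card ≤ (Finset.Icc 1 n).card := Finset.card_le_card hA
    _ = n := by rw [Nat.card_Icc]; omega
  rw [if_neg]; rintro ⟨rfl, -⟩; omega

lemma PW_zero_eq (ε n : ℕ) (lam : ℂ) (q : ℕ → ℂ) :
    PW ε 0 n lam q = if 0 = n % 2 then 1 else 0 := by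
  classical
  rw [PW, Finset.sum_eq_single (∅ : Finset ℕ)]
  · simp [Prk]
  · intro A hA hne
    rw [if_neg]; rintro ⟨h0, -⟩; exact hne (Finset.card_eq_zero.mp h0)
  · simp

noncomputable def F (n : ℕ) (lam : ℂ) (q : ℕ → ℂ) : ℂ :=
  ∑ j ∈ Finset.range (n+1), (-1 : ℂ)^((n - j)/2) * PW 1 j n lam q

lemma F_succ (m : ℕ) (lam : ℂ) (q : ℕ → ℂ) :
    F (m+2) lam q = (lam - q (m+2)) * F (m+1) lam q - F m lam q := by
  rw [F, Finset.sum_range_succ' _ (m+2)]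
  have h0 : PW 1 0 (m+2) lam q = PW 1 0 m lam q := by
    rw [PW_zero_eq, PW_zero_eq]
    have : (m+2) % 2 = m % 2 := by omega
    rw [this]
  have hstep : ∀ i ∈ Finset.range (m+2),
      (-1:ℂ)^((m+2-(i+1))/2) * PW 1 (i+1) (m+2) lam q
      = (lam - q (m+2)) * ((-1:ℂ)^((m+1-i)/2) * PW 1 i (m+1) lam q)
        + (-1:ℂ)^((m+2-(i+1))/2) * PW 1 (i+1) m lam q := by
    intro i _
    rw [PW_succ, show m + 2 - (i+1) = m + 1 - i from by omega]
    ring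
  rw [Finset.sum_congr rfl hstep, Finset.sum_add_distrib, ← Finset.mul_sum]
  have hF1 : ∑ i ∈ Finset.range (m+2), (-1:ℂ)^((m+1-i)/2) * PW 1 i (m+1) lam q
      = F (m+1) lam q := rfl
  rw [hF1]
  have hFm : (∑ i ∈ Finset.range (m+2), (-1:ℂ)^((m+2-(i+1))/2) * PW 1 (i+1) m lam q)
      + (-1:ℂ)^((m+2-0)/2) * PW 1 0 (m+2) lam q = - F m lam q := by
    rw [h0]
    have : (∑ i ∈ Finset.range (m+2), (-1:ℂ)^((m+2-(i+1))/2) * PW 1 (i+1) m lam q)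
        + (-1:ℂ)^((m+2-0)/2) * PW 1 0 m lam q
        = ∑ j ∈ Finset.range (m+3), (-1:ℂ)^((m+2-j)/2) * PW 1 j m lam q := by
      rw [Finset.sum_range_succ' (fun j => (-1:ℂ)^((m+2-j)/2) * PW 1 j m lam q) (m+2)]
    rw [this, Finset.sum_range_succ, Finset.sum_range_succ,
        PW_zero_card (by omega), PW_zero_card (by omega), mul_zero, mul_zero,
        add_zero, add_zero, F, ← Finset.sum_neg_distrib]
    refine Finset.sum_congr rfl fun j hj => ?_
    rw [Finset.mem_range] at hj
    by_cases hp : j % 2 = m % 2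
    · rw [show m + 2 - j = (m - j) + 2 from by omega,
        show ((m-j)+2)/2 = (m-j)/2 + 1 from by omega, pow_succ]
      ring
    · rw [PW_zero_parity hp, mul_zero, mul_zero, neg_zero]
  rw [add_assoc, hFm]
  ring

lemma F_zero (lam : ℂ) (q : ℕ → ℂ) : F 0 lam q = 1 := by
  rw [F]
  simp [PW_zero_eq]

lemma PW_one_one (ε : ℕ) (lam : ℂ) (q : ℕ → ℂ) :
    PW ε 1 1 lam q = if (1 + 0) % 2 = ε then lam - q 1 else 0 := by
  classical
  rw [PW, show Finset.Icc 1 1 = {1} from Finset.Icc_self 1, show ({1} : Finset ℕ).powerset = {∅, {1}} from rfl,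
    Finset.sum_pair (Finset.singleton_ne_empty 1).symm]
  rw [if_neg (by simp)]
  by_cases h : (1 + 0) % 2 = ε
  · rw [if_pos h, if_pos, zero_add, Finset.prod_singleton]
    refine ⟨by simp, by simp, ?_⟩
    intro x hx
    rw [Finset.mem_singleton] at hx
    subst hx
    simpa [rk, Finset.filter_singleton] using h
  · rw [if_neg h, if_neg, zero_add]
    rintro ⟨-, -, h3⟩
    have := h3 1 (Finset.mem_singleton_self 1)
    simp [rk, Finset.filter_singleton] at this
    exact h (by simpa using this)

lemma F_one (lam : ℂ) (q : ℕ → ℂ) : F 1 lam q = lam - q 1 := by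
  rw [F, Finset.sum_range_succ, Finset.sum_range_one, PW_zero_eq, PW_one_one]
  norm_num

lemma phi_eq (lam : ℂ) (q : ℕ → ℂ) : ∀ n, phi lam q (n+1) = F n lam q := by
  intro n
  induction n using Nat.twoStepInduction with
  | zero => rw [F_zero]; rfl
  | one => rw [F_one]; simp [phi]
  | more n ih1 ih2 =>
    rw [F_succ, ← ih1, ← ih2]
    show (lam - q (n+1+1)) * phi lam q (n+1+1) - phi lam q (n+1) = _
    rw [show n+1+1 = n+2 from rfl]

lemma theta_shift (lam : ℂ) (q : ℕ → ℂ) :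
    ∀ n, theta lam q (n+1) = - phi lam (fun k => q (k+1)) n := by
  intro n
  induction n using Nat.twoStepInduction with
  | zero => show (0:ℂ) = -0; rw [neg_zero]
  | one =>
    show (lam - q 1) * theta lam q 1 - theta lam q 0 = _
    show (lam - q 1) * 0 - 1 = -1
    ring
  | more n ih1 ih2 =>
    show (lam - q (n+1+1)) * theta lam q (n+1+1) - theta lam q (n+1)
      = -((lam - q (n+1+1)) * phi lam (fun k => q (k+1)) (n+1) - phi lam (fun k => q (k+1)) n)
    rw [ih1, ih2]
    ring

lemma filter_image_lt (A : Finset ℕ) (x : ℕ) :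
    (A.image (· + 1)).filter (· < x + 1) = (A.filter (· < x)).image (· + 1) := by
  ext y
  simp only [Finset.mem_filter, Finset.mem_image]
  constructor
  · rintro ⟨⟨a, ha, rfl⟩, hy⟩; exact ⟨a, ⟨ha, by omega⟩, rfl⟩
  · rintro ⟨a, ⟨ha, hy⟩, rfl⟩; exact ⟨⟨a, ha, rfl⟩, by omega⟩

lemma rk_image (A : Finset ℕ) (x : ℕ) : rk (A.image (· + 1)) (x + 1) = rk A x := by
  rw [rk, rk, filter_image_lt, Finset.card_image_of_injective _ (fun a b h => by omega)]

lemma Prk_image (A : Finset ℕ) : Prk 0 (A.image (· + 1)) ↔ Prk 1 A := by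
  constructor
  · intro h x hx
    have := h (x+1) (Finset.mem_image_of_mem _ hx)
    rw [rk_image] at this
    omega
  · intro h y hy
    rw [Finset.mem_image] at hy
    obtain ⟨x, hx, rfl⟩ := hy
    rw [rk_image]
    have := h x hx
    omega

/-- shift reindex: the `ε = 1` sum for shifted potential equals the `ε = 0` sum. -/
lemma PW_shift (j n : ℕ) (lam : ℂ) (q : ℕ → ℂ) :
    PW 1 j n lam (fun k => q (k+1)) = PW 0 j (n+2) lam q := by
  classical
  rw [PW, PW, ← Finset.sum_filter, ← Finset.sum_filter]
  refine Finset.sum_nbij' (fun A => A.image (· + 1)) (fun B => B.image (· - 1)) ?_ ?_ ?_ ?_ ?_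
  · intro A hA
    simp only [Finset.mem_filter, Finset.mem_powerset] at hA ⊢
    obtain ⟨hsub, hcard, hpar, hprk⟩ := hA
    refine ⟨fun y hy => ?_, ?_, by omega, (Prk_image A).mpr hprk⟩
    · rw [Finset.mem_image] at hy
      obtain ⟨x, hx, rfl⟩ := hy
      have := hsub hx
      rw [Finset.mem_Icc] at this ⊢
      omega
    · rw [Finset.card_image_of_injective _ (fun a b h => by omega)]; exact hcard
  · intro B hB
    simp only [Finset.mem_filter, Finset.mem_powerset] at hB ⊢
    obtain ⟨hsub, hcard, hpar, hprk⟩ := hB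
    have hmem : ∀ x ∈ B, 2 ≤ x ∧ x ≤ n + 1 := by
      intro x hx
      have hIcc := hsub hx
      rw [Finset.mem_Icc] at hIcc
      have hne1 : x ≠ 1 := by
        intro h; subst h
        have := hprk 1 hx
        have h0 : B.filter (· < 1) = ∅ := Finset.filter_eq_empty_iff.mpr fun y hy => by
          have := hsub hy; rw [Finset.mem_Icc] at this; omega
        rw [rk, h0, Finset.card_empty] at this
        omega
      have hne2 : x ≠ n + 2 := by
        intro h; subst h
        have := hprk (n+2) hx
        have hrk : rk B (n+2) = B.card - 1 := by
          rw [rk]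
          have : B.filter (· < n + 2) = B.erase (n+2) := by
            ext y
            simp only [Finset.mem_filter, Finset.mem_erase]
            constructor
            · rintro ⟨hy, hlt⟩; exact ⟨by omega, hy⟩
            · rintro ⟨hne, hy⟩
              have := hsub hy; rw [Finset.mem_Icc] at this
              exact ⟨hy, by omega⟩
          rw [this, Finset.card_erase_of_mem hx]
        have hpos : 1 ≤ B.card := Finset.card_pos.mpr ⟨n+2, hx⟩
        omega
      omega
    have himg : (B.image (· - 1)).image (· + 1) = B := by
      rw [Finset.image_image]
      have : ∀ x ∈ B, (x - 1) + 1 = x := fun x hx => by have := (hmem x hx).1; omega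
      calc B.image (fun x => (x - 1) + 1) = B.image id := Finset.image_congr (fun x hx => by show x - 1 + 1 = x; exact this x hx)
        _ = B := Finset.image_id
    refine ⟨fun y hy => ?_, ?_, by omega, ?_⟩
    · rw [Finset.mem_image] at hy
      obtain ⟨x, hx, rfl⟩ := hy
      have := hmem x hx
      rw [Finset.mem_Icc]
      omega
    · rw [Finset.card_image_of_injOn (fun a ha b hb h => by
        have := hmem a ha; have := hmem b hb; omega)]
      exact hcard
    · rw [← Prk_image, himg]; exact hprk
  · intro A hA
    show Finset.image (fun x => x - 1) (Finset.image (fun x => x + 1) A) = A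
    rw [Finset.image_image]
    calc A.image (fun x => (x + 1) - 1) = A.image id := Finset.image_congr (fun x _ => by show x + 1 - 1 = x; omega)
      _ = A := Finset.image_id
  · intro B hB
    simp only [Finset.mem_filter, Finset.mem_powerset] at hB
    obtain ⟨hsub, hcard, hpar, hprk⟩ := hB
    have hmem : ∀ x ∈ B, 2 ≤ x := by
      intro x hx
      have hIcc := hsub hx
      rw [Finset.mem_Icc] at hIcc
      have hne1 : x ≠ 1 := by
        intro h; subst h
        have := hprk 1 hx
        have h0 : B.filter (· < 1) = ∅ := Finset.filter_eq_empty_iff.mpr fun y hy => by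
          have := hsub hy; rw [Finset.mem_Icc] at this; omega
        rw [rk, h0, Finset.card_empty] at this
        omega
      omega
    show Finset.image (fun x => x + 1) (Finset.image (fun x => x - 1) B) = B
    rw [Finset.image_image]
    calc B.image (fun x => (x - 1) + 1) = B.image id :=
        Finset.image_congr (fun x hx => by show x - 1 + 1 = x; have := hmem x hx; omega)
      _ = B := Finset.image_id
  · intro A hA
    rw [Finset.prod_image (fun x _ y _ h => by omega)]

def Crk (A : Finset ℕ) : Prop := ∀ x ∈ A, ∀ y ∈ A, (x + rk A x) % 2 = (y + rk A y) % 2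

lemma parity_const {j : ℕ} {f : Fin j → ℕ}
    (hodd : ∀ (s : Fin j) (h : (s : ℕ) + 1 < j), Odd ((f ⟨(s : ℕ) + 1, h⟩ : ℤ) - (f s : ℤ))) :
    ∀ s t : Fin j, (f s + (s : ℕ)) % 2 = (f t + (t : ℕ)) % 2 := by
  have hodd' : ∀ k (hk1 : k < j) (hk2 : k + 1 < j),
      Odd ((f ⟨k+1, hk2⟩ : ℤ) - (f ⟨k, hk1⟩ : ℤ)) := fun k hk1 hk2 => hodd ⟨k, hk1⟩ hk2
  have key : ∀ k (hk : k < j), (f ⟨k, hk⟩ + k) % 2 = (f ⟨0, by omega⟩ + 0) % 2 := by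
    intro k
    induction k with
    | zero => intro hk; rfl
    | succ m ih =>
      intro hk
      have hm : m < j := by omega
      have := hodd' m hm hk
      rw [Int.odd_iff] at this
      have ihm := ih hm
      omega
  intro s t
  rw [show s = (⟨(s : ℕ), s.isLt⟩ : Fin j) from rfl, show t = (⟨(t : ℕ), t.isLt⟩ : Fin j) from rfl,
    key (s : ℕ) s.isLt, key (t : ℕ) t.isLt]

lemma rk_image_strictMono {j : ℕ} {f : Fin j → ℕ} (hmono : StrictMono f) (s : Fin j) :
    rk (Finset.image f Finset.univ) (f s) = (s : ℕ) := by
  classical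
  rw [rk]
  have h1 : (Finset.image f Finset.univ).filter (· < f s)
      = Finset.image f (Finset.univ.filter (· < s)) := by
    ext y
    simp only [Finset.mem_filter, Finset.mem_image, Finset.mem_univ, true_and]
    constructor
    · rintro ⟨⟨t, rfl⟩, hlt⟩; exact ⟨t, hmono.lt_iff_lt.mp hlt, rfl⟩
    · rintro ⟨t, hts, rfl⟩; exact ⟨⟨t, rfl⟩, hmono hts⟩
  rw [h1, Finset.card_image_of_injective _ hmono.injective]
  have h2 : Finset.univ.filter (· < s) = Finset.Iio s := by ext t; simp
  rw [h2]
  simp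

lemma image_orderEmbOfFin {j : ℕ} (A : Finset ℕ) (h : A.card = j) :
    Finset.image (A.orderEmbOfFin h) Finset.univ = A := by
  classical
  ext x
  simp only [Finset.mem_image, Finset.mem_univ, true_and]
  constructor
  · rintro ⟨i, rfl⟩; exact Finset.orderEmbOfFin_mem A h i
  · intro hx
    have := Finset.range_orderEmbOfFin A h
    have hx' : x ∈ Set.range (A.orderEmbOfFin h) := by rw [this]; exact hx
    exact hx'

open Classical in
lemma Gpoly_tuple_eq (j n : ℕ) (hj : j ≠ 0) (lam : ℂ) (q : ℕ → ℂ) :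
    Gpoly j n lam q
      = ∑ A ∈ (Finset.Icc 1 n).powerset,
          if A.card = j ∧ Crk A then ∏ x ∈ A, (lam - q x) else 0 := by
  classical
  rw [Gpoly, if_neg hj, ← Finset.sum_filter, ← Finset.sum_filter]
  apply Finset.sum_bij (i := fun β _ => Finset.image (fun s => ((β s : ℕ))) Finset.univ)
  · intro β hβ
    rw [Finset.mem_filter] at hβ
    obtain ⟨-, hmono, hbd, hodd⟩ := hβ
    rw [Finset.mem_filter, Finset.mem_powerset]
    refine ⟨fun x hx => ?_, ?_, ?_⟩
    · rw [Finset.mem_image] at hx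
      obtain ⟨s, -, rfl⟩ := hx
      rw [Finset.mem_Icc]
      exact hbd s
    · rw [Finset.card_image_of_injective _ hmono.injective, Finset.card_univ, Fintype.card_fin]
    · intro x hx y hy
      rw [Finset.mem_image] at hx hy
      obtain ⟨s, -, rfl⟩ := hx
      obtain ⟨t, -, rfl⟩ := hy
      rw [rk_image_strictMono hmono s, rk_image_strictMono hmono t]
      exact parity_const (f := fun s => ((β s : ℕ))) hodd s t
  · intro β₁ h₁ β₂ h₂ heq
    rw [Finset.mem_filter] at h₁ h₂
    obtain ⟨-, hmono₁, -, -⟩ := h₁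
    obtain ⟨-, hmono₂, -, -⟩ := h₂
    have hcard : (Finset.image (fun s => ((β₁ s : ℕ))) Finset.univ).card = j := by
      rw [Finset.card_image_of_injective _ hmono₁.injective, Finset.card_univ, Fintype.card_fin]
    have e₁ := Finset.orderEmbOfFin_unique hcard
      (f := fun s => ((β₁ s : ℕ))) (fun s => Finset.mem_image_of_mem _ (Finset.mem_univ s)) hmono₁
    have e₂ := Finset.orderEmbOfFin_unique hcard
      (f := fun s => ((β₂ s : ℕ)))
      (fun s => by rw [heq]; exact Finset.mem_image_of_mem _ (Finset.mem_univ s)) hmono₂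
    funext s
    exact Fin.ext (by rw [congrFun e₁ s, congrFun e₂ s])
  · intro A hA
    rw [Finset.mem_filter, Finset.mem_powerset] at hA
    obtain ⟨hsub, hcard, hcrk⟩ := hA
    set g := A.orderEmbOfFin hcard with hg
    have hmono : StrictMono (fun s => (g s : ℕ)) := fun s t hst => g.strictMono hst
    have himg : Finset.image (fun s => (g s : ℕ)) Finset.univ = A := image_orderEmbOfFin A hcard
    have hmem : ∀ s : Fin j, g s ∈ A := Finset.orderEmbOfFin_mem A hcard
    have hbd : ∀ s : Fin j, 1 ≤ g s ∧ g s ≤ n := by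
      intro s
      have := hsub (hmem s)
      rwa [Finset.mem_Icc] at this
    have hrk : ∀ s : Fin j, rk A (g s) = (s : ℕ) := by
      intro s
      have := rk_image_strictMono hmono s
      rwa [himg] at this
    have hD : isD j n (fun s => (g s : ℕ)) := by
      refine ⟨hmono, hbd, ?_⟩
      intro s h
      have h1 := hcrk (g ⟨(s:ℕ)+1, h⟩) (hmem _) (g s) (hmem s)
      rw [hrk ⟨(s:ℕ)+1, h⟩, hrk s] at h1
      have h1' : (g ⟨(s:ℕ)+1, h⟩ + ((s:ℕ)+1)) % 2 = (g s + (s:ℕ)) % 2 := h1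
      have hlt : g s < g ⟨(s:ℕ)+1, h⟩ := g.strictMono (by simp [Fin.lt_def])
      show Odd ((g ⟨(s:ℕ)+1, h⟩ : ℤ) - (g s : ℤ))
      rw [Int.odd_iff]
      omega
    refine ⟨fun s => ⟨g s, by have := (hbd s).2; omega⟩, ?_, himg⟩
    rw [Finset.mem_filter]
    exact ⟨Finset.mem_univ _, hD⟩
  · intro β hβ
    rw [Finset.mem_filter] at hβ
    obtain ⟨-, hmono, -, -⟩ := hβ
    exact (Finset.prod_image (f := fun y => lam - q y) (g := fun s => ((β s : ℕ)))
      (fun s _ t _ h => hmono.injective h)).symm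

lemma PW0_self (n : ℕ) (hn : 1 ≤ n) (lam : ℂ) (q : ℕ → ℂ) : PW 0 n n lam q = 0 := by
  classical
  refine Finset.sum_eq_zero fun A hA => ?_
  rw [Finset.mem_powerset] at hA
  rw [if_neg]
  rintro ⟨h1, h2, h3⟩
  have hAeq : A = Finset.Icc 1 n := Finset.eq_of_subset_of_card_le hA (by rw [Nat.card_Icc, h1]; omega)
  have h1A : 1 ∈ A := by rw [hAeq, Finset.mem_Icc]; omega
  have := h3 1 h1A
  have h0 : A.filter (· < 1) = ∅ := Finset.filter_eq_empty_iff.mpr fun y hy => by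
    have := hA hy; rw [Finset.mem_Icc] at this; omega
  rw [rk, h0, Finset.card_empty] at this
  omega

lemma theta_eq (lam : ℂ) (q : ℕ → ℂ) (N : ℕ) :
    theta lam q (N+1) = ∑ j ∈ Finset.range (N+2), (-1:ℂ)^((N+1-j)/2) * PW 0 j (N+1) lam q := by
  cases N with
  | zero =>
    show (0:ℂ) = _
    rw [Finset.sum_range_succ, Finset.sum_range_one, PW_zero_eq, PW_one_one]
    norm_num
  | succ M =>
    rw [theta_shift, phi_eq, F]
    have hs : ∀ j ∈ Finset.range (M+1),
        (-1:ℂ)^((M-j)/2) * PW 1 j M lam (fun k => q (k+1))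
        = (-1:ℂ)^((M-j)/2) * PW 0 j (M+2) lam q := by
      intro j _
      rw [PW_shift]
    rw [Finset.sum_congr rfl hs]
    rw [Finset.sum_range_succ (fun j => (-1:ℂ)^((M+1+1-j)/2) * PW 0 j (M+1+1) lam q) (M+2)]
    rw [Finset.sum_range_succ (fun j => (-1:ℂ)^((M+1+1-j)/2) * PW 0 j (M+1+1) lam q) (M+1)]
    rw [PW0_self (M+2) (by omega), PW_zero_parity (by omega), mul_zero, mul_zero,
      add_zero, add_zero, ← Finset.sum_neg_distrib]
    refine Finset.sum_congr rfl fun j hj => ?_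
    rw [Finset.mem_range] at hj
    by_cases hp : j % 2 = M % 2
    · rw [show M + 1 + 1 - j = (M - j) + 2 from by omega,
        show ((M-j)+2)/2 = (M-j)/2 + 1 from by omega, pow_succ]
      ring
    · rw [PW_zero_parity (show j % 2 ≠ (M+2) % 2 from by omega)]
      ring

open Classical in
lemma Gpoly_split (j n : ℕ) (hj : j ≠ 0) (hpar : j % 2 = n % 2) (lam : ℂ) (q : ℕ → ℂ) :
    Gpoly j n lam q = PW 1 j n lam q + PW 0 j n lam q := by
  classical
  rw [Gpoly_tuple_eq j n hj, PW, PW, ← Finset.sum_add_distrib]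
  refine Finset.sum_congr rfl fun A hA => ?_
  by_cases hc : A.card = j
  · have hne : A.Nonempty := Finset.card_pos.mp (by omega)
    obtain ⟨a, ha⟩ := hne
    by_cases h1 : Prk 1 A
    · rw [if_pos ⟨hc, fun x hx y hy => by rw [h1 x hx, h1 y hy]⟩,
        if_pos ⟨hc, hpar, h1⟩, if_neg, add_zero]
      rintro ⟨-, -, h0⟩
      have := h1 a ha
      have := h0 a ha
      omega
    · by_cases h0 : Prk 0 A
      · rw [if_pos ⟨hc, fun x hx y hy => by rw [h0 x hx, h0 y hy]⟩,
          if_neg (fun hx => h1 hx.2.2), if_pos ⟨hc, hpar, h0⟩, zero_add]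
      · rw [if_neg, if_neg (by tauto), if_neg (by tauto), add_zero]
        rintro ⟨-, hcrk⟩
        rcases Nat.mod_two_eq_zero_or_one (a + rk A a) with hm | hm
        · exact h0 fun x hx => by rw [hcrk x hx a ha, hm]
        · exact h1 fun x hx => by rw [hcrk x hx a ha, hm]
  · rw [if_neg (by tauto), if_neg (by tauto), if_neg (by tauto), add_zero]

lemma Gpoly_zero_split (n : ℕ) (hn : n % 2 = 0) (lam : ℂ) (q : ℕ → ℂ) :
    Gpoly 0 n lam q = PW 1 0 n lam q + PW 0 0 n lam q := by
  rw [Gpoly, if_pos rfl, PW_zero_eq, PW_zero_eq, if_pos (show (0:ℕ) = n % 2 from by omega)]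
  norm_num

lemma sum_range_two_mul (K : ℕ) (f : ℕ → ℂ) :
    ∑ i ∈ Finset.range (2*K), f i = ∑ m ∈ Finset.range K, (f (2*m) + f (2*m+1)) := by
  induction K with
  | zero => rfl
  | succ L ih =>
    rw [show 2*(L+1) = (2*L+1)+1 from by omega, Finset.sum_range_succ, Finset.sum_range_succ,
      ih, Finset.sum_range_succ]
    ring

lemma Delta_key (N : ℕ) (lam : ℂ) (q : ℕ → ℂ) :
    Delta N lam q = ∑ j ∈ Finset.range (N+2),
      (-1:ℂ)^((N+1-j)/2) * (PW 1 j (N+1) lam q + PW 0 j (N+1) lam q) := by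
  rw [Delta, phi_eq lam q (N+1), theta_eq lam q N, F, ← Finset.sum_add_distrib]
  exact Finset.sum_congr rfl fun j _ => by ring


end DAux

open DAux in
theorem Delta_eq_sum_Gpoly (N : ℕ) (lam : ℂ) (q : ℕ → ℂ) :
    (Odd N → Delta N lam q
      = ∑ j ∈ Finset.range ((N + 1) / 2 + 1),
          (-1 : ℂ) ^ (j + (N + 1) / 2) * Gpoly (2 * j) (N + 1) lam q) ∧
    (Even N → Delta N lam q
      = ∑ j ∈ Finset.range (N / 2 + 1),
          (-1 : ℂ) ^ (j + N / 2) * Gpoly (2 * j + 1) (N + 1) lam q) := by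
  constructor
  · intro hN
    have hN2 : N % 2 = 1 := Nat.odd_iff.mp hN
    rw [Delta_key]
    rw [show (∑ j ∈ Finset.range (N+2),
        (-1:ℂ)^((N+1-j)/2) * (PW 1 j (N+1) lam q + PW 0 j (N+1) lam q))
      = ∑ j ∈ Finset.range (N+3),
        (-1:ℂ)^((N+1-j)/2) * (PW 1 j (N+1) lam q + PW 0 j (N+1) lam q) from by
      rw [Finset.sum_range_succ
        (fun j => (-1:ℂ)^((N+1-j)/2) * (PW 1 j (N+1) lam q + PW 0 j (N+1) lam q)) (N+2),
        PW_zero_card (by omega), PW_zero_card (by omega)]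
      norm_num]
    rw [show N+3 = 2*((N+1)/2+1) from by omega, sum_range_two_mul]
    refine Finset.sum_congr rfl fun m hm => ?_
    rw [Finset.mem_range] at hm
    have hm' : m ≤ (N+1)/2 := by omega
    have hodd : (-1:ℂ)^((N+1-(2*m+1))/2) * (PW 1 (2*m+1) (N+1) lam q + PW 0 (2*m+1) (N+1) lam q) = 0 := by
      rw [PW_zero_parity (show (2*m+1) % 2 ≠ (N+1) % 2 from by omega),
        PW_zero_parity (show (2*m+1) % 2 ≠ (N+1) % 2 from by omega)]
      ring
    rw [hodd, add_zero]
    have hsign : (-1:ℂ)^((N+1-2*m)/2) = (-1:ℂ)^(m+(N+1)/2) := by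
      rw [show (N+1-2*m)/2 = (N+1)/2 - m from by omega,
        show m + (N+1)/2 = ((N+1)/2 - m) + 2*m from by omega,
        pow_add, pow_mul, neg_one_sq, one_pow, mul_one]
    rw [hsign]
    rcases Nat.eq_zero_or_pos m with rfl | hmpos
    · rw [show 2*0 = 0 from rfl, Gpoly_zero_split (N+1) (by omega)]
    · rw [Gpoly_split (2*m) (N+1) (by omega) (by omega)]
  · intro hN
    have hN2 : N % 2 = 0 := Nat.even_iff.mp hN
    rw [Delta_key]
    rw [show N+2 = 2*(N/2+1) from by omega, sum_range_two_mul]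
    refine Finset.sum_congr rfl fun m hm => ?_
    rw [Finset.mem_range] at hm
    have hm' : m ≤ N/2 := by omega
    have heven : (-1:ℂ)^((N+1-2*m)/2) * (PW 1 (2*m) (N+1) lam q + PW 0 (2*m) (N+1) lam q) = 0 := by
      rw [PW_zero_parity (show (2*m) % 2 ≠ (N+1) % 2 from by omega),
        PW_zero_parity (show (2*m) % 2 ≠ (N+1) % 2 from by omega)]
      ring
    rw [heven, zero_add]
    have hsign : (-1:ℂ)^((N+1-(2*m+1))/2) = (-1:ℂ)^(m+N/2) := by
      rw [show (N+1-(2*m+1))/2 = N/2 - m from by omega,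
        show m + N/2 = (N/2 - m) + 2*m from by omega,
        pow_add, pow_mul, neg_one_sq, one_pow, mul_one]
    rw [hsign, Gpoly_split (2*m+1) (N+1) (by omega) (by omega)]
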